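/- Two centered, integrable probability measures μ, ν on ℤ are equal if and only if their potential functions U_μ and U_ν agree at every integer. -/

import Mathlib

open scoped BigOperators

/-- A probability mass function on the integers with finite first moment and mean zero. -/
def IsCenteredPMF (μ : ℤ → ℝ) : Prop :=
  (∀ y, 0 ≤ μ y) ∧ HasSum μ 1 ∧ Summable (fun y : ℤ => |(y : ℝ)| * μ y) ∧
    (∑' y : ℤ, (y : ℝ) * μ y) = 0

/-- The potential of a measure on ℤ: `U_μ(x) = ∑_y |x - y| μ({y})`. -/
noncomputable def potential (μ : ℤ → ℝ) (x : ℤ) : ℝ :=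
  ∑' y : ℤ, |(x : ℝ) - (y : ℝ)| * μ y

lemma summable_pot (μ : ℤ → ℝ) (h : IsCenteredPMF μ) (x : ℤ) :
    Summable (fun y : ℤ => |(x : ℝ) - (y : ℝ)| * μ y) := by
  obtain ⟨hpos, hsum, habs, _⟩ := h
  have hμ : Summable μ := hsum.summable
  refine Summable.of_nonneg_of_le (fun y => mul_nonneg (abs_nonneg _) (hpos y)) (fun y => ?_)
    ((hμ.mul_left |(x : ℝ)|).add habs)
  have h1 : |(x : ℝ) - (y : ℝ)| ≤ |(x : ℝ)| + |(y : ℝ)| := by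
    have := abs_add_le (x : ℝ) (-(y : ℝ))
    simpa [sub_eq_add_neg] using this
  have := mul_le_mul_of_nonneg_right h1 (hpos y)
  linarith [this]

lemma abs_key (x y : ℤ) :
    |((x : ℝ) + 1) - (y : ℝ)| + |((x : ℝ) - 1) - (y : ℝ)| - 2 * |(x : ℝ) - (y : ℝ)|
      = if y = x then 2 else 0 := by
  by_cases h : y = x
  · subst h; simp; norm_num
  · have hne : x - y ≠ 0 := by omega
    have h1 : (1 : ℝ) ≤ |(x : ℝ) - (y : ℝ)| := by
      have := Int.one_le_abs hne
      have : ((1 : ℤ) : ℝ) ≤ ((|x - y| : ℤ) : ℝ) := by exact_mod_cast this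
      simpa [Int.cast_abs] using this
    simp only [h, if_false]
    rcases abs_cases ((x : ℝ) - (y : ℝ)) with ⟨h2, h3⟩ | ⟨h2, h3⟩
    · rw [abs_of_nonneg (by linarith), abs_of_nonneg (by linarith)]; linarith
    · rw [abs_of_nonpos (by linarith), abs_of_nonpos (by linarith)]; linarith

lemma pot_id (μ : ℤ → ℝ) (h : IsCenteredPMF μ) (x : ℤ) :
    potential μ (x + 1) + potential μ (x - 1) - 2 * potential μ x = 2 * μ x := by
  have S1 : Summable (fun y : ℤ => |((x : ℝ) + 1) - (y : ℝ)| * μ y) := by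
    simpa [Int.cast_add, Int.cast_one] using summable_pot μ h (x + 1)
  have S2 : Summable (fun y : ℤ => |((x : ℝ) - 1) - (y : ℝ)| * μ y) := by
    simpa [Int.cast_sub, Int.cast_one] using summable_pot μ h (x - 1)
  have S3 : Summable (fun y : ℤ => |(x : ℝ) - (y : ℝ)| * μ y) := summable_pot μ h x
  have e1 : potential μ (x + 1) = ∑' y : ℤ, |((x : ℝ) + 1) - (y : ℝ)| * μ y := by
    simp [potential, Int.cast_add, Int.cast_one]
  have e2 : potential μ (x - 1) = ∑' y : ℤ, |((x : ℝ) - 1) - (y : ℝ)| * μ y := by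
    simp [potential, Int.cast_sub, Int.cast_one]
  rw [e1, e2, potential, ← tsum_mul_left, ← Summable.tsum_add S1 S2,
    ← Summable.tsum_sub (S1.add S2) (S3.mul_left 2)]
  have : ∀ y : ℤ,
      |((x : ℝ) + 1) - (y : ℝ)| * μ y + |((x : ℝ) - 1) - (y : ℝ)| * μ y
        - 2 * (|(x : ℝ) - (y : ℝ)| * μ y)
      = if y = x then 2 * μ x else 0 := by
    intro y
    have hk := abs_key x y
    have h2 : |((x : ℝ) + 1) - (y : ℝ)| * μ y + |((x : ℝ) - 1) - (y : ℝ)| * μ y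
        - 2 * (|(x : ℝ) - (y : ℝ)| * μ y)
        = (|((x : ℝ) + 1) - (y : ℝ)| + |((x : ℝ) - 1) - (y : ℝ)|
            - 2 * |(x : ℝ) - (y : ℝ)|) * μ y := by ring
    rw [h2, hk]
    by_cases hy : y = x
    · subst hy; simp
    · simp [hy]
  calc (∑' y : ℤ, (|((x : ℝ) + 1) - (y : ℝ)| * μ y + |((x : ℝ) - 1) - (y : ℝ)| * μ y
        - 2 * (|(x : ℝ) - (y : ℝ)| * μ y)))
      = ∑' y : ℤ, (if y = x then 2 * μ x else 0) := tsum_congr this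
    _ = 2 * μ x := tsum_ite_eq x (fun _ => 2 * μ x)

theorem stmt3 (μ ν : ℤ → ℝ) (hμ : IsCenteredPMF μ) (hν : IsCenteredPMF ν) :
    μ = ν ↔ ∀ x : ℤ, potential μ x = potential ν x := by
  constructor
  · rintro rfl x; rfl
  · intro hpot
    funext x
    have A := pot_id μ hμ x
    have B := pot_id ν hν x
    rw [hpot (x + 1), hpot (x - 1), hpot x] at A
    linarith
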